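/- An ℝ-linear isometric automorphism f of ℍⁿ belongs to TSp(ℍⁿ) ∩ TU(ℍⁿ) if and only if there exist a unit quaternion a lying in ℂ ∪ ℂj (equivalently, a i a⁻¹ = ±i) and g ∈ Sp(ℍⁿ) such that f(v) = a • g(v) for all v ∈ ℍⁿ; in other words, TSp(ℍⁿ) ∩ TU(ℍⁿ) = TU(1)·Sp(ℍⁿ). -/

import Mathlib

open Quaternion

set_option maxHeartbeats 1000000

/-- The embedding of `ℂ = ℝ ⊕ ℝi` into `ℍ`. -/
def cq (z : ℂ) : ℍ := ⟨z.re, z.im, 0, 0⟩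

/-- `ℍⁿ`, the orthogonal direct sum of `n` copies of `ℍ`, as a real inner product space
and left `ℍ`-module. -/
abbrev Hn (n : ℕ) := PiLp 2 (fun _ : Fin n => ℍ)

section Helpers

lemma unit_normSq {a : ℍ} (h : (a * star a).re = 1) : normSq a = 1 := by
  have hs := Quaternion.self_mul_star a
  rw [hs] at h; simpa using h

lemma unit_of_re {a : ℍ} (h : (a * star a).re = 1) : a * star a = 1 := by
  rw [Quaternion.self_mul_star, unit_normSq h]; simp

lemma unit_of_re' {a : ℍ} (h : (a * star a).re = 1) : star a * a = 1 := by
  rw [Quaternion.star_mul_self, unit_normSq h]; simp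

lemma norm_one_of_re {a : ℍ} (h : (a * star a).re = 1) : ‖a‖ = 1 := by
  have h2 := unit_normSq h
  have := Quaternion.normSq_eq_norm_mul_self a
  nlinarith [norm_nonneg a]

lemma my_conj_mul {a : ℍ} (h2 : star a * a = 1) (x y : ℍ) :
    a * (x * y) * star a = (a * x * star a) * (a * y * star a) := by
  have h : a * x * star a * (a * y * star a) = a * (x * (star a * (a * (y * star a)))) := by
    simp only [mul_assoc]
  rw [h, ← mul_assoc (star a) a (y * star a), h2, one_mul]
  simp only [mul_assoc]

noncomputable def lmul (n : ℕ) (b : ℍ) (hb : ‖b‖ = 1) : Hn n ≃ₗᵢ[ℝ] Hn n where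
  toFun v := b • v
  invFun v := b⁻¹ • v
  map_add' := smul_add b
  map_smul' c v := (smul_comm c b v).symm
  left_inv v := by
    have hb0 : b ≠ 0 := by intro h; rw [h] at hb; simp at hb
    show b⁻¹ • b • v = v
    rw [smul_smul, inv_mul_cancel₀ hb0, one_smul]
  right_inv v := by
    have hb0 : b ≠ 0 := by intro h; rw [h] at hb; simp at hb
    show b • b⁻¹ • v = v
    rw [smul_smul, mul_inv_cancel₀ hb0, one_smul]
  norm_map' v := by simp [norm_smul, hb]

lemma lmul_apply (n : ℕ) (b : ℍ) (hb : ‖b‖ = 1) (v : Hn n) : lmul n b hb v = b • v := rfl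

lemma smul_cancel {n : ℕ} {x y : ℍ} {w : Hn n} (hw : w ≠ 0) (h : x • w = y • w) : x = y := by
  have hex : ∃ t, w t ≠ 0 := by
    by_contra hc
    push_neg at hc
    exact hw (PiLp.ext hc)
  obtain ⟨t, ht⟩ := hex
  have h2 : x * w t = y * w t := congrArg (fun u : Hn n => u t) h
  exact mul_right_cancel₀ ht h2

@[simp] lemma my_coe_algebraMap (x : ℝ) : algebraMap ℝ ℍ x = (x : ℍ) := rfl

def qI : ℍ := (⟨0,1,0,0⟩ : ℍ[ℝ,-1,-1])
def qJ : ℍ := (⟨0,0,1,0⟩ : ℍ[ℝ,-1,-1])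
def qK : ℍ := (⟨0,0,0,1⟩ : ℍ[ℝ,-1,-1])

@[simp] lemma qI_re : qI.re = 0 := rfl
@[simp] lemma qI_imI : qI.imI = 1 := rfl
@[simp] lemma qI_imJ : qI.imJ = 0 := rfl
@[simp] lemma qI_imK : qI.imK = 0 := rfl
@[simp] lemma qJ_re : qJ.re = 0 := rfl
@[simp] lemma qJ_imI : qJ.imI = 0 := rfl
@[simp] lemma qJ_imJ : qJ.imJ = 1 := rfl
@[simp] lemma qJ_imK : qJ.imK = 0 := rfl
@[simp] lemma qK_re : qK.re = 0 := rfl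
@[simp] lemma qK_imI : qK.imI = 0 := rfl
@[simp] lemma qK_imJ : qK.imJ = 0 := rfl
@[simp] lemma qK_imK : qK.imK = 1 := rfl

lemma quat_decomp (r : ℍ) :
    r = (r.re:ℍ) + r.imI • qI + r.imJ • qJ + r.imK • qK := by
  ext <;> simp

lemma conj_coe {a : ℍ} (h1 : a * star a = 1) (x : ℝ) : a * (x:ℍ) * star a = (x:ℍ) := by
  rw [← Quaternion.coe_commutes, mul_assoc, h1, mul_one]

lemma eq_conj_of_basis {κ : ℍ ≃ₐ[ℝ] ℍ} {a : ℍ} (h1 : a * star a = 1) (h2 : star a * a = 1)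
    (hI : κ qI = a * qI * star a) (hJ : κ qJ = a * qJ * star a) :
    ∀ r, κ r = a * r * star a := by
  have hK : κ qK = a * qK * star a := by
    have hk : qK = qI * qJ := by ext <;> simp
    rw [hk, map_mul, hI, hJ, ← my_conj_mul h2]
  intro r
  conv_rhs => rw [quat_decomp r]
  simp only [mul_add, add_mul, Algebra.mul_smul_comm, Algebra.smul_mul_assoc]
  rw [conj_coe h1, ← hI, ← hJ, ← hK]
  conv_lhs => rw [quat_decomp r]
  rw [map_add, map_add, map_add, map_smul, map_smul, map_smul, ← my_coe_algebraMap, κ.commutes,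
    my_coe_algebraMap]

noncomputable def conjA (a : ℍ) (h1 : a * star a = 1) (h2 : star a * a = 1) : ℍ ≃ₐ[ℝ] ℍ where
  toFun r := a * r * star a
  invFun r := star a * r * a
  left_inv r := by
    calc star a * (a * r * star a) * a = (star a * a) * (r * (star a * a)) := by
          simp only [mul_assoc]
      _ = r := by rw [h2]; simp
  right_inv r := by
    calc a * (star a * r * a) * star a = (a * star a) * (r * (a * star a)) := by
          simp only [mul_assoc]
      _ = r := by rw [h1]; simp
  map_mul' x y := my_conj_mul h2 x y
  map_add' x y := by simp [mul_add, add_mul]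
  commutes' x := by
    show a * (x : ℍ) * star a = (x : ℍ)
    exact conj_coe h1 x

lemma conjA_apply (a : ℍ) (h1 : a * star a = 1) (h2 : star a * a = 1) (r : ℍ) :
    conjA a h1 h2 r = a * r * star a := rfl

lemma cq_I : cq Complex.I = qI := by ext <;> simp [cq]

lemma cq_conj_I : cq (starRingEnd ℂ Complex.I) = -qI := by ext <;> simp [cq]

lemma unit_re_C (c d : ℝ) (h : c * c + d * d = 1) :
    ∀ a : ℍ, a = (⟨c,d,0,0⟩ : ℍ[ℝ,-1,-1]) → (a * star a).re = 1 := by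
  intro a ha
  have e1 : a.re = c := by subst ha; rfl
  have e2 : a.imI = d := by subst ha; rfl
  have e3 : a.imJ = 0 := by subst ha; rfl
  have e4 : a.imK = 0 := by subst ha; rfl
  simp [Quaternion.re_mul, e1, e2, e3, e4]
  nlinarith

lemma unit_re_Cj (c d : ℝ) (h : c * c + d * d = 1) :
    ∀ a : ℍ, a = (⟨0,0,c,d⟩ : ℍ[ℝ,-1,-1]) → (a * star a).re = 1 := by
  intro a ha
  have e1 : a.re = 0 := by subst ha; rfl
  have e2 : a.imI = 0 := by subst ha; rfl
  have e3 : a.imJ = c := by subst ha; rfl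
  have e4 : a.imK = d := by subst ha; rfl
  simp [Quaternion.re_mul, e1, e2, e3, e4]
  nlinarith

lemma conjI_C (c d : ℝ) (h : c * c + d * d = 1) :
    ∀ a : ℍ, a = (⟨c,d,0,0⟩ : ℍ[ℝ,-1,-1]) → a * qI * star a = qI := by
  intro a ha
  have e1 : a.re = c := by subst ha; rfl
  have e2 : a.imI = d := by subst ha; rfl
  have e3 : a.imJ = 0 := by subst ha; rfl
  have e4 : a.imK = 0 := by subst ha; rfl
  ext <;> simp [Quaternion.re_mul, Quaternion.imI_mul, Quaternion.imJ_mul,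
    Quaternion.imK_mul, e1, e2, e3, e4] <;> nlinarith

lemma conjJ_C (c d z w : ℝ) (hz : c * c - d * d = z) (hw : c * d + d * c = w) :
    ∀ a : ℍ, a = (⟨c,d,0,0⟩ : ℍ[ℝ,-1,-1]) → a * qJ * star a = (⟨0,0,z,w⟩ : ℍ[ℝ,-1,-1]) := by
  intro a ha
  have e1 : a.re = c := by subst ha; rfl
  have e2 : a.imI = d := by subst ha; rfl
  have e3 : a.imJ = 0 := by subst ha; rfl
  have e4 : a.imK = 0 := by subst ha; rfl
  ext <;> simp [Quaternion.re_mul, Quaternion.imI_mul, Quaternion.imJ_mul,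
    Quaternion.imK_mul, e1, e2, e3, e4] <;> nlinarith

lemma conjI_Cj (c d : ℝ) (h : c * c + d * d = 1) :
    ∀ a : ℍ, a = (⟨0,0,c,d⟩ : ℍ[ℝ,-1,-1]) → a * qI * star a = -qI := by
  intro a ha
  have e1 : a.re = 0 := by subst ha; rfl
  have e2 : a.imI = 0 := by subst ha; rfl
  have e3 : a.imJ = c := by subst ha; rfl
  have e4 : a.imK = d := by subst ha; rfl
  ext <;> simp [Quaternion.re_mul, Quaternion.imI_mul, Quaternion.imJ_mul,
    Quaternion.imK_mul, e1, e2, e3, e4] <;> nlinarith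

lemma conjJ_Cj (c d z w : ℝ) (hz : c * c - d * d = z) (hw : c * d + d * c = w) :
    ∀ a : ℍ, a = (⟨0,0,c,d⟩ : ℍ[ℝ,-1,-1]) → a * qJ * star a = (⟨0,0,z,w⟩ : ℍ[ℝ,-1,-1]) := by
  intro a ha
  have e1 : a.re = 0 := by subst ha; rfl
  have e2 : a.imI = 0 := by subst ha; rfl
  have e3 : a.imJ = c := by subst ha; rfl
  have e4 : a.imK = d := by subst ha; rfl
  ext <;> simp [Quaternion.re_mul, Quaternion.imI_mul, Quaternion.imJ_mul,
    Quaternion.imK_mul, e1, e2, e3, e4] <;> nlinarith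

lemma cq_re (z : ℂ) : (cq z).re = z.re := rfl
lemma cq_imI (z : ℂ) : (cq z).imI = z.im := rfl
lemma cq_imJ (z : ℂ) : (cq z).imJ = 0 := rfl
lemma cq_imK (z : ℂ) : (cq z).imK = 0 := rfl

end Helpers

/-- An ℝ-linear isometric automorphism `f` of `ℍⁿ` lies in `TSp(ℍⁿ) ∩ TU(ℍⁿ)` iff
`f = a • g` for some unit quaternion `a ∈ ℂ ∪ ℂj` and some `g ∈ Sp(ℍⁿ)`;
that is, `TSp(ℍⁿ) ∩ TU(ℍⁿ) = TU(1)·Sp(ℍⁿ)`. -/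
theorem mem_TSp_inter_TU_iff (n : ℕ) (f : Hn n ≃ₗᵢ[ℝ] Hn n) :
    ((∃ κ : ℍ ≃ₐ[ℝ] ℍ, ∀ (r : ℍ) (v : Hn n), f (r • v) = κ r • f v) ∧
      ((∀ (z : ℂ) (v : Hn n), f (cq z • v) = cq z • f v) ∨
        (∀ (z : ℂ) (v : Hn n), f (cq z • v) = cq (starRingEnd ℂ z) • f v))) ↔
    ∃ (a : ℍ) (g : Hn n ≃ₗᵢ[ℝ] Hn n),
      (a * star a).re = 1 ∧
      ((a.imJ = 0 ∧ a.imK = 0) ∨ (a.re = 0 ∧ a.imI = 0)) ∧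
      (∀ (r : ℍ) (v : Hn n), g (r • v) = r • g v) ∧
      ∀ v : Hn n, f v = a • g v := by
  constructor
  · rintro ⟨⟨κ, hκ⟩, hC⟩
    by_cases hn : n = 0
    · subst hn
      refine ⟨1, f, by simp, Or.inl ⟨rfl, rfl⟩, ?_, ?_⟩
      · intro r v
        have hsub : ∀ x y : Hn 0, x = y := fun x y => PiLp.ext fun t => t.elim0
        rw [hsub (r • v) v, hsub (r • f v) (f v)]
      · intro v; rw [one_smul]
    · have hn0 : 0 < n := Nat.pos_of_ne_zero hn
      set v₀ : Hn n := WithLp.toLp 2 (fun _ => (1:ℍ)) with hv₀def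
      have hv₀ : v₀ ≠ 0 := fun h => one_ne_zero (congrArg (fun u : Hn n => u ⟨0, hn0⟩) h)
      have hw : f v₀ ≠ 0 := by
        intro h
        exact hv₀ (f.map_eq_zero_iff.mp h)
      have hIcase : κ qI = qI ∨ κ qI = -qI := by
        rcases hC with hC | hC
        · left
          have heq : κ (cq Complex.I) • f v₀ = cq Complex.I • f v₀ := by
            rw [← hκ, hC]
          have := smul_cancel hw heq
          rwa [cq_I] at this
        · right
          have heq : κ (cq Complex.I) • f v₀ = cq (starRingEnd ℂ Complex.I) • f v₀ := by
            rw [← hκ, hC]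
          have := smul_cancel hw heq
          rwa [cq_I, cq_conj_I] at this
      set q : ℍ := κ qJ with hqdef
      have hq2 : q * q = -1 := by
        rw [hqdef, ← map_mul]
        have hjj : qJ * qJ = -1 := by ext <;> simp
        rw [hjj, map_neg, map_one]
      have hanti : qI * q + q * qI = 0 := by
        have h0 : qI * qJ + qJ * qI = 0 := by ext <;> simp
        have hh := congrArg κ h0
        rw [map_add, map_mul, map_mul, map_zero] at hh
        rcases hIcase with hI | hI <;> rw [hI, ← hqdef] at hh
        · exact hh
        · rw [neg_mul, mul_neg] at hh
          have : -(qI * q + q * qI) = 0 := by rw [neg_add]; exact hh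
          exact neg_eq_zero.mp this
      have hqimI : q.imI = 0 := by
        have hh := congrArg QuaternionAlgebra.re hanti
        simp [Quaternion.re_mul] at hh
        linarith
      have hqre : q.re = 0 := by
        have hh := congrArg QuaternionAlgebra.imI hanti
        simp [Quaternion.imI_mul] at hh
        linarith
      have hqn : q.imJ^2 + q.imK^2 = 1 := by
        have hh := congrArg QuaternionAlgebra.re hq2
        simp [Quaternion.re_mul, hqre, hqimI] at hh
        nlinarith
      obtain ⟨u, hu⟩ := IsAlgClosed.exists_pow_nat_eq (k := ℂ) ⟨q.imJ, q.imK⟩ two_pos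
      have hz : u.re * u.re - u.im * u.im = q.imJ := by
        have hh := congrArg Complex.re hu
        simpa [pow_two, Complex.mul_re] using hh
      have hwim : u.re * u.im + u.im * u.re = q.imK := by
        have hh := congrArg Complex.im hu
        simpa [pow_two, Complex.mul_im] using hh
      have hn1 : u.re * u.re + u.im * u.im = 1 := by
        have hs2 : (u.re * u.re + u.im * u.im)^2 = 1 := by
          linear_combination (u.re * u.re - u.im * u.im + q.imJ) * hz + (u.re * u.im + u.im * u.re + q.imK) * hwim + hqn
        nlinarith [sq_nonneg u.re, sq_nonneg u.im, sq_nonneg (u.re * u.re + u.im * u.im - 1)]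
      rcases hIcase with hI | hI
      · -- a ∈ ℂ
        set a : ℍ := (⟨u.re, u.im, 0, 0⟩ : ℍ[ℝ,-1,-1]) with hadef
        have hqmk : q = (⟨0, 0, q.imJ, q.imK⟩ : ℍ[ℝ,-1,-1]) := by
          ext <;> simp [hqre, hqimI]
        have hun : (a * star a).re = 1 := unit_re_C u.re u.im hn1 a hadef
        have h1 := unit_of_re hun
        have h2 := unit_of_re' hun
        have hconjI : a * qI * star a = qI := conjI_C u.re u.im hn1 a hadef
        have hconjJ : κ qJ = a * qJ * star a := by
          rw [← hqdef, hqmk]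
          exact (conjJ_C u.re u.im q.imJ q.imK hz hwim a hadef).symm
        have hκeq : ∀ r, κ r = a * r * star a :=
          eq_conj_of_basis h1 h2 (hI.trans hconjI.symm) hconjJ
        have hnorm : ‖star a‖ = 1 := by
          rw [Quaternion.norm_star]; exact norm_one_of_re hun
        refine ⟨a, f.trans (lmul n (star a) hnorm), hun, Or.inl ⟨rfl, rfl⟩, ?_, ?_⟩
        · intro r v
          show star a • f (r • v) = r • (star a • f v)
          rw [hκ, hκeq, smul_smul, smul_smul]
          congr 1
          calc star a * (a * r * star a) = (star a * a) * (r * star a) := by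
                simp only [mul_assoc]
            _ = r * star a := by rw [h2, one_mul]
        · intro v
          show f v = a • (star a • f v)
          rw [smul_smul, h1, one_smul]
      · -- a ∈ ℂj
        set a : ℍ := (⟨0, 0, u.re, u.im⟩ : ℍ[ℝ,-1,-1]) with hadef
        have hqmk : q = (⟨0, 0, q.imJ, q.imK⟩ : ℍ[ℝ,-1,-1]) := by
          ext <;> simp [hqre, hqimI]
        have hun : (a * star a).re = 1 := unit_re_Cj u.re u.im hn1 a hadef
        have h1 := unit_of_re hun
        have h2 := unit_of_re' hun
        have hconjI : a * qI * star a = -qI := conjI_Cj u.re u.im hn1 a hadef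
        have hconjJ : κ qJ = a * qJ * star a := by
          rw [← hqdef, hqmk]
          exact (conjJ_Cj u.re u.im q.imJ q.imK hz hwim a hadef).symm
        have hκeq : ∀ r, κ r = a * r * star a :=
          eq_conj_of_basis h1 h2 (hI.trans hconjI.symm) hconjJ
        have hnorm : ‖star a‖ = 1 := by
          rw [Quaternion.norm_star]; exact norm_one_of_re hun
        refine ⟨a, f.trans (lmul n (star a) hnorm), hun, Or.inr ⟨rfl, rfl⟩, ?_, ?_⟩
        · intro r v
          show star a • f (r • v) = r • (star a • f v)
          rw [hκ, hκeq, smul_smul, smul_smul]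
          congr 1
          calc star a * (a * r * star a) = (star a * a) * (r * star a) := by
                simp only [mul_assoc]
            _ = r * star a := by rw [h2, one_mul]
        · intro v
          show f v = a • (star a • f v)
          rw [smul_smul, h1, one_smul]
  · rintro ⟨a, g, hun, hcase, hg, hfg⟩
    have h1 := unit_of_re hun
    have h2 := unit_of_re' hun
    constructor
    · refine ⟨conjA a h1 h2, ?_⟩
      intro r v
      rw [conjA_apply, hfg (r • v), hfg v, hg, smul_smul, smul_smul]
      congr 1
      calc a * r = a * r * (star a * a) := by rw [h2, mul_one]
        _ = a * r * star a * a := by simp only [mul_assoc]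
    · rcases hcase with ⟨hJ0, hK0⟩ | ⟨hre0, hI0⟩
      · left
        intro z v
        have hcomm : a * cq z = cq z * a := by
          ext <;> simp [cq_re, cq_imI, cq_imJ, cq_imK, Quaternion.re_mul, Quaternion.imI_mul, Quaternion.imJ_mul,
            Quaternion.imK_mul, hJ0, hK0] <;> ring
        rw [hfg (cq z • v), hfg v, hg, smul_smul, smul_smul, hcomm]
      · right
        intro z v
        have hcomm : a * cq z = cq (starRingEnd ℂ z) * a := by
          ext <;> simp [cq_re, cq_imI, cq_imJ, cq_imK, Quaternion.re_mul, Quaternion.imI_mul, Quaternion.imJ_mul,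
            Quaternion.imK_mul, hre0, hI0] <;> ring
        rw [hfg (cq z • v), hfg v, hg, smul_smul, smul_smul, hcomm]
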